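/- Let (u₁, x₁, y₁) and (u₂, x₂, y₂) be two trajectories (in a linear set of triples) satisfying the energy inequality ⟨P(t)x(t),x(t)⟩ + ∫_τ^t ‖y‖² ≤ ⟨P(τ)x(τ),x(τ)⟩ + ∫_τ^t ‖u‖² + ∫_τ^t ⟨Ṗ x, x⟩ + 2Re ∫_τ^t ⟨P x, G x⟩, where P(t) = P(t)* ≥ δI for some δ > 0, with P, Ṗ, G uniformly bounded on [τ, T]. If x₁(τ) = x₂(τ) and u₁ = u₂, then x₁ = x₂ on [τ, T] and y₁ = y₂ a.e. on [τ, T]. -/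

import Mathlib

open Set MeasureTheory
open scoped RealInnerProductSpace

/-- uniqueness of trajectories satisfying the time-varying energy inequality.
If the difference of two trajectories (with the same initial state and input) satisfies the
energy inequality with zero input, where `P(t) = P(t)* ≥ δ I`, `δ > 0`, and `P, Ṗ, G` are
uniformly bounded, then the states coincide and the outputs agree almost everywhere. -/
theorem uniqueness_from_energy_inequality
    {X Y : Type*}
    [NormedAddCommGroup X] [InnerProductSpace ℝ X] [CompleteSpace X]
    [NormedAddCommGroup Y] [InnerProductSpace ℝ Y] [CompleteSpace Y]
    (τ T : ℝ) (hτT : τ ≤ T)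
    (P P' G : ℝ → X →L[ℝ] X)
    (hsa : ∀ t ∈ Icc τ T, ∀ u v : X, ⟪P t u, v⟫ = ⟪u, P t v⟫)
    (δ : ℝ) (hδ : 0 < δ)
    (hPδ : ∀ t ∈ Icc τ T, ∀ z : X, δ * ‖z‖ ^ 2 ≤ ⟪P t z, z⟫)
    (CP CP' CG : ℝ)
    (hPb : ∀ t ∈ Icc τ T, ‖P t‖ ≤ CP)
    (hP'b : ∀ t ∈ Icc τ T, ‖P' t‖ ≤ CP')
    (hGb : ∀ t ∈ Icc τ T, ‖G t‖ ≤ CG)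
    (hPc : ∀ z : X, ContinuousOn (fun t => P t z) (Icc τ T))
    (x₁ x₂ : ℝ → X) (y₁ y₂ : ℝ → Y)
    (hx₁ : ContinuousOn x₁ (Icc τ T)) (hx₂ : ContinuousOn x₂ (Icc τ T))
    (hyint : ∀ t ∈ Icc τ T,
      IntervalIntegrable (fun s => ‖y₁ s - y₂ s‖ ^ 2) volume τ t)
    -- the energy inequality for the difference trajectory (zero input, by linearity):
    (henergy : ∀ t ∈ Icc τ T,
      ⟪P t (x₁ t - x₂ t), x₁ t - x₂ t⟫ + ∫ s in τ..t, ‖y₁ s - y₂ s‖ ^ 2 ≤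
        ⟪P τ (x₁ τ - x₂ τ), x₁ τ - x₂ τ⟫ +
          (∫ s in τ..t, ⟪P' s (x₁ s - x₂ s), x₁ s - x₂ s⟫) +
          2 * ∫ s in τ..t, ⟪P s (x₁ s - x₂ s), G s (x₁ s - x₂ s)⟫)
    (hinit : x₁ τ = x₂ τ) :
    (∀ t ∈ Icc τ T, x₁ t = x₂ t) ∧
      (∀ᵐ s ∂(volume.restrict (Icc τ T)), y₁ s = y₂ s) := by
  set z : ℝ → X := fun t => x₁ t - x₂ t with hz
  set f : ℝ → ℝ := fun t => ⟪P t (z t), z t⟫ with hf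
  have hτmem : τ ∈ Icc τ T := ⟨le_refl τ, hτT⟩
  have hCP : 0 ≤ CP := le_trans (norm_nonneg _) (hPb τ hτmem)
  have hCP' : 0 ≤ CP' := le_trans (norm_nonneg _) (hP'b τ hτmem)
  have hCG : 0 ≤ CG := le_trans (norm_nonneg _) (hGb τ hτmem)
  have hzc : ContinuousOn z (Icc τ T) := hx₁.sub hx₂
  have hzτ : z τ = 0 := by simp [hz, hinit]
  have hfτ : f τ = 0 := by simp [hf, hzτ]
  have hf0 : ∀ t ∈ Icc τ T, 0 ≤ f t := fun t ht =>
    le_trans (by positivity) (hPδ t ht (z t))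
  -- continuity of t ↦ P t (z t)
  have hwc : ContinuousOn (fun t => P t (z t)) (Icc τ T) := by
    intro t₀ ht₀
    have h1 : Filter.Tendsto (fun t => P t (z t - z t₀)) (nhdsWithin t₀ (Icc τ T)) (nhds 0) := by
      have hb : Filter.Tendsto (fun t => CP * ‖z t - z t₀‖) (nhdsWithin t₀ (Icc τ T)) (nhds 0) := by
        have : Filter.Tendsto (fun t => z t - z t₀) (nhdsWithin t₀ (Icc τ T)) (nhds 0) := by
          have h0 : Filter.Tendsto (fun t => z t - z t₀) (nhdsWithin t₀ (Icc τ T))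
              (nhds (z t₀ - z t₀)) := Filter.Tendsto.sub (hzc t₀ ht₀) tendsto_const_nhds
          simpa using h0
        simpa using (this.norm.const_mul CP)
      apply squeeze_zero_norm' _ hb
      filter_upwards [self_mem_nhdsWithin] with t ht
      calc ‖P t (z t - z t₀)‖ ≤ ‖P t‖ * ‖z t - z t₀‖ := (P t).le_opNorm _
        _ ≤ CP * ‖z t - z t₀‖ := by
          exact mul_le_mul_of_nonneg_right (hPb t ht) (norm_nonneg _)
    have h2 := hPc (z t₀) t₀ ht₀
    have h3 := h1.add h2
    rw [zero_add] at h3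
    refine h3.congr (fun t => ?_)
    simp [map_sub]
  have hfc : ContinuousOn f (Icc τ T) := hwc.inner hzc
  -- extend f continuously to ℝ
  set fe : ℝ → ℝ := fun t => f (projIcc τ T hτT t) with hfedef
  have hfec : Continuous fe :=
    hfc.comp_continuous (continuous_subtype_val.comp (continuous_projIcc))
      (fun t => (projIcc τ T hτT t).2)
  have hfeeq : ∀ t ∈ Icc τ T, fe t = f t := fun t ht => by
    simp [hfedef, projIcc_of_mem hτT ht]
  have hfe0 : ∀ t, 0 ≤ fe t := fun t => hf0 _ (projIcc τ T hτT t).2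
  set F : ℝ → ℝ := fun t => ∫ s in τ..t, fe s with hFdef
  have hF' : ∀ t : ℝ, HasDerivAt F (fe t) t := fun t =>
    (hfec.integral_hasStrictDerivAt τ t).hasDerivAt
  have hF0 : ∀ t, τ ≤ t → 0 ≤ F t := fun t ht =>
    intervalIntegral.integral_nonneg ht (fun s _ => hfe0 s)
  have hFeq : ∀ t ∈ Icc τ T, F t = ∫ s in τ..t, f s := by
    intro t ht
    apply intervalIntegral.integral_congr
    intro s hs
    rw [uIcc_of_le ht.1] at hs
    exact hfeeq s ⟨hs.1, le_trans hs.2 ht.2⟩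
  have hintf : ∀ t ∈ Icc τ T, IntervalIntegrable f volume τ t := by
    intro t ht
    apply ContinuousOn.intervalIntegrable
    apply hfc.mono
    rw [uIcc_of_le ht.1]
    exact Icc_subset_Icc le_rfl ht.2
  set c1 : ℝ := CP' / δ with hc1def
  set c2 : ℝ := CP * CG / δ with hc2def
  have hc1 : 0 ≤ c1 := div_nonneg hCP' hδ.le
  have hc2 : 0 ≤ c2 := div_nonneg (mul_nonneg hCP hCG) hδ.le
  -- pointwise bounds
  have hA : ∀ s ∈ Icc τ T, ⟪P' s (z s), z s⟫ ≤ c1 * f s := by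
    intro s hs
    calc ⟪P' s (z s), z s⟫ ≤ ‖P' s (z s)‖ * ‖z s‖ := real_inner_le_norm _ _
      _ ≤ (CP' * ‖z s‖) * ‖z s‖ := by
          apply mul_le_mul_of_nonneg_right _ (norm_nonneg _)
          exact le_trans ((P' s).le_opNorm _)
            (mul_le_mul_of_nonneg_right (hP'b s hs) (norm_nonneg _))
      _ = c1 * (δ * ‖z s‖ ^ 2) := by rw [hc1def, div_mul_eq_mul_div, eq_div_iff hδ.ne']; ring
      _ ≤ c1 * f s := mul_le_mul_of_nonneg_left (hPδ s hs (z s)) hc1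
  have hB : ∀ s ∈ Icc τ T, ⟪P s (z s), G s (z s)⟫ ≤ c2 * f s := by
    intro s hs
    calc ⟪P s (z s), G s (z s)⟫ ≤ ‖P s (z s)‖ * ‖G s (z s)‖ := real_inner_le_norm _ _
      _ ≤ (CP * ‖z s‖) * (CG * ‖z s‖) := by
          apply mul_le_mul _ _ (norm_nonneg _) (mul_nonneg hCP (norm_nonneg _))
          · exact le_trans ((P s).le_opNorm _)
              (mul_le_mul_of_nonneg_right (hPb s hs) (norm_nonneg _))
          · exact le_trans ((G s).le_opNorm _)
              (mul_le_mul_of_nonneg_right (hGb s hs) (norm_nonneg _))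
      _ = c2 * (δ * ‖z s‖ ^ 2) := by rw [hc2def, div_mul_eq_mul_div, eq_div_iff hδ.ne']; ring
      _ ≤ c2 * f s := mul_le_mul_of_nonneg_left (hPδ s hs (z s)) hc2
  -- key integral inequality: f t ≤ M * F t
  set M : ℝ := c1 + 2 * c2 with hMdef
  have hM : 0 ≤ M := by positivity
  have hkey : ∀ t ∈ Icc τ T, f t ≤ M * F t := by
    intro t ht
    have hmemIcc : ∀ s ∈ Icc τ t, s ∈ Icc τ T := fun s hs => ⟨hs.1, le_trans hs.2 ht.2⟩
    have hIy : 0 ≤ ∫ s in τ..t, ‖y₁ s - y₂ s‖ ^ 2 :=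
      intervalIntegral.integral_nonneg ht.1 (fun s _ => by positivity)
    have hIA : (∫ s in τ..t, ⟪P' s (z s), z s⟫) ≤ ∫ s in τ..t, c1 * f s := by
      by_cases hi : IntervalIntegrable (fun s => ⟪P' s (z s), z s⟫) volume τ t
      · exact intervalIntegral.integral_mono_on ht.1 hi ((hintf t ht).const_mul c1)
          (fun s hs => hA s (hmemIcc s hs))
      · rw [intervalIntegral.integral_undef hi]
        exact intervalIntegral.integral_nonneg ht.1
          (fun s hs => mul_nonneg hc1 (hf0 s (hmemIcc s hs)))
    have hIB : (∫ s in τ..t, ⟪P s (z s), G s (z s)⟫) ≤ ∫ s in τ..t, c2 * f s := by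
      by_cases hi : IntervalIntegrable (fun s => ⟪P s (z s), G s (z s)⟫) volume τ t
      · exact intervalIntegral.integral_mono_on ht.1 hi ((hintf t ht).const_mul c2)
          (fun s hs => hB s (hmemIcc s hs))
      · rw [intervalIntegral.integral_undef hi]
        exact intervalIntegral.integral_nonneg ht.1
          (fun s hs => mul_nonneg hc2 (hf0 s (hmemIcc s hs)))
    have he : f t + (∫ s in τ..t, ‖y₁ s - y₂ s‖ ^ 2) ≤
        f τ + (∫ s in τ..t, ⟪P' s (z s), z s⟫) +
          2 * ∫ s in τ..t, ⟪P s (z s), G s (z s)⟫ := henergy t ht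
    rw [hfτ] at he
    have : f t ≤ (∫ s in τ..t, c1 * f s) + 2 * ∫ s in τ..t, c2 * f s := by
      nlinarith [hIy, hIA, hIB]
    rw [intervalIntegral.integral_const_mul, intervalIntegral.integral_const_mul] at this
    rw [hFeq t ht]
    calc f t ≤ c1 * (∫ s in τ..t, f s) + 2 * (c2 * ∫ s in τ..t, f s) := this
      _ = M * ∫ s in τ..t, f s := by ring
  -- Grönwall
  have hFz : ∀ t ∈ Icc τ T, F t = 0 := by
    intro t ht
    have hFc : ContinuousOn F (Icc τ T) := fun s _ => (hF' s).continuousAt.continuousWithinAt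
    have hgron := norm_le_gronwallBound_of_norm_deriv_right_le (f := F) (f' := fe)
      (δ := 0) (K := M) (ε := 0) (a := τ) (b := T) hFc
      (fun s _ => (hF' s).hasDerivWithinAt) (by simp [hFdef])
      (fun s hs => by
        have hs' : s ∈ Icc τ T := ⟨hs.1, hs.2.le⟩
        rw [Real.norm_eq_abs, Real.norm_eq_abs, abs_of_nonneg (hfe0 s),
          abs_of_nonneg (hF0 s hs.1), add_zero, hfeeq s hs']
        exact hkey s hs')
    have := hgron t ht
    rw [gronwallBound_ε0_δ0] at this
    have := le_antisymm (le_trans (le_abs_self _) this) (hF0 t ht.1)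
    linarith [abs_nonneg (F t), this]
  have hz0 : ∀ t ∈ Icc τ T, z t = 0 := by
    intro t ht
    have h1 : f t ≤ 0 := by
      have := hkey t ht
      rw [hFz t ht, mul_zero] at this
      exact this
    have h2 : δ * ‖z t‖ ^ 2 ≤ 0 := le_trans (hPδ t ht (z t)) h1
    have h3 : ‖z t‖ ^ 2 ≤ 0 := by nlinarith
    have h4 : ‖z t‖ ^ 2 = 0 := le_antisymm h3 (by positivity)
    exact norm_eq_zero.mp (pow_eq_zero_iff two_ne_zero |>.mp h4)
  have hx : ∀ t ∈ Icc τ T, x₁ t = x₂ t := fun t ht => sub_eq_zero.mp (hz0 t ht)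
  refine ⟨hx, ?_⟩
  -- output part
  have hIzero : ∀ (g : ℝ → ℝ), (∀ s ∈ Icc τ T, g s = 0) → (∫ s in τ..T, g s) = 0 := by
    intro g hg
    rw [intervalIntegral.integral_congr (g := fun _ => (0:ℝ))
      (fun s hs => by rw [uIcc_of_le hτT] at hs; exact hg s hs)]
    simp
  have hTmem : T ∈ Icc τ T := ⟨hτT, le_refl T⟩
  have he : f T + (∫ s in τ..T, ‖y₁ s - y₂ s‖ ^ 2) ≤
      f τ + (∫ s in τ..T, ⟪P' s (z s), z s⟫) +
        2 * ∫ s in τ..T, ⟪P s (z s), G s (z s)⟫ := henergy T hTmem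
  have hfT : f T = 0 := by simp [hf, hz0 T hTmem]
  have hIA0 : (∫ s in τ..T, ⟪P' s (z s), z s⟫) = 0 :=
    hIzero _ (fun s hs => by simp [hz0 s hs])
  have hIB0 : (∫ s in τ..T, ⟪P s (z s), G s (z s)⟫) = 0 :=
    hIzero _ (fun s hs => by simp [hz0 s hs])
  rw [hfT, hfτ, hIA0, hIB0] at he
  have hIynn : 0 ≤ ∫ s in τ..T, ‖y₁ s - y₂ s‖ ^ 2 :=
    intervalIntegral.integral_nonneg hτT (fun s _ => by positivity)
  have hIyz : ∫ s in Ioc τ T, ‖y₁ s - y₂ s‖ ^ 2 = 0 := by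
    rw [← intervalIntegral.integral_of_le hτT]; linarith
  have hint : IntegrableOn (fun s => ‖y₁ s - y₂ s‖ ^ 2) (Ioc τ T) volume :=
    (hyint T hTmem).1
  have hae := (integral_eq_zero_iff_of_nonneg
    (f := fun s => ‖y₁ s - y₂ s‖ ^ 2) (fun s => sq_nonneg _) hint).mp hIyz
  rw [← Measure.restrict_congr_set Ioc_ae_eq_Icc]
  filter_upwards [hae] with s hs
  have hs' : ‖y₁ s - y₂ s‖ ^ 2 = 0 := hs
  exact sub_eq_zero.mp (norm_eq_zero.mp (pow_eq_zero_iff two_ne_zero |>.mp hs'))
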